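/- Let Φ = {φ_n}_{n=1}^N ⊆ ℂ³ and let 𝐀 : ℍ^{3×3} → ℝ^N be the super analysis operator 𝐀H = (⟨H, φ_n φ_n*⟩_HS)_n. If the null space of 𝐀 has real dimension at least 2, then the intensity measurement map A(x) = (|⟨x,φ_n⟩|²)_n is not injective modulo 𝕋. -/

import Mathlib

open Matrix

private lemma sum_fin3' {M : Type*} [AddCommMonoid M] (f : Fin 3 → M) (a b c : Fin 3)
    (hab : a ≠ b) (hac : a ≠ c) (hbc : b ≠ c) :
    ∑ i, f i = f a + f b + f c := by
  fin_cases a <;> fin_cases b <;> fin_cases c <;>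
    simp_all [Fin.sum_univ_three] <;> abel

theorem stmt_11 (N : ℕ) (Φ : Fin N → Fin 3 → ℂ)
    (A B : Matrix (Fin 3) (Fin 3) ℂ)
    (hA : A.IsHermitian) (hB : B.IsHermitian)
    (hli : LinearIndependent ℝ ![A, B])
    (hAnull : ∀ n, (Matrix.vecMulVec (Φ n) (star (Φ n)) * A).trace = 0)
    (hBnull : ∀ n, (Matrix.vecMulVec (Φ n) (star (Φ n)) * B).trace = 0) :
    ¬ ∀ x y : Fin 3 → ℂ,
        (∀ n, ‖star (Φ n) ⬝ᵥ x‖ ^ 2 = ‖star (Φ n) ⬝ᵥ y‖ ^ 2) →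
        ∃ c : ℂ, ‖c‖ = 1 ∧ y = c • x := by
  intro h
  -- trace condition as quadratic form
  have key : ∀ (M : Matrix (Fin 3) (Fin 3) ℂ) (n : Fin N),
      (Matrix.vecMulVec (Φ n) (star (Φ n)) * M).trace = star (Φ n) ⬝ᵥ (M *ᵥ Φ n) := by
    intro M n
    simp only [Matrix.trace, Matrix.diag, Matrix.mul_apply, Matrix.vecMulVec_apply,
      dotProduct, Matrix.mulVec, Pi.star_apply, Finset.mul_sum]
    rw [Finset.sum_comm]
    apply Finset.sum_congr rfl
    intro i _
    apply Finset.sum_congr rfl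
    intro j _
    ring
  -- find t with the combination singular
  have hfpi : ((Real.cos Real.pi : ℂ) • A + (Real.sin Real.pi : ℂ) • B).det
      = - A.det := by
    simp only [Real.cos_pi, Real.sin_pi, Complex.ofReal_neg, Complex.ofReal_one,
      Complex.ofReal_zero, neg_smul, one_smul, zero_smul, add_zero]
    rw [show (-A : Matrix (Fin 3) (Fin 3) ℂ).det = (-1)^(Fintype.card (Fin 3)) * A.det from
      Matrix.det_neg A]
    norm_num
  have hcont : Continuous fun t : ℝ =>
      (((Real.cos t : ℂ) • A + (Real.sin t : ℂ) • B).det).re := by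
    apply Complex.continuous_re.comp
    apply Continuous.matrix_det
    exact ((Complex.continuous_ofReal.comp Real.continuous_cos).smul continuous_const).add
      ((Complex.continuous_ofReal.comp Real.continuous_sin).smul continuous_const)
  obtain ⟨t, ht⟩ : ∃ t : ℝ, (((Real.cos t : ℂ) • A + (Real.sin t : ℂ) • B).det).re = 0 := by
    set g : ℝ → ℝ := fun t => (((Real.cos t : ℂ) • A + (Real.sin t : ℂ) • B).det).re with hg
    have h0 : g 0 = A.det.re := by simp [hg]
    have hpi : g Real.pi = - A.det.re := by
      simp only [hg]
      rw [hfpi]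
      simp
    rcases lt_trichotomy (g 0) 0 with hc | hc | hc
    · have hmem : (0:ℝ) ∈ Set.Icc (g 0) (g Real.pi) := by
        constructor
        · linarith
        · rw [hpi, h0] at *; linarith [hc]
      obtain ⟨t, _, ht⟩ := intermediate_value_Icc Real.pi_pos.le hcont.continuousOn hmem
      exact ⟨t, ht⟩
    · exact ⟨0, hc⟩
    · have hmem : (0:ℝ) ∈ Set.Icc (g Real.pi) (g 0) := by
        constructor
        · rw [hpi, h0] at *; linarith [hc]
        · linarith
      obtain ⟨t, _, ht⟩ := intermediate_value_Icc' Real.pi_pos.le hcont.continuousOn hmem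
      exact ⟨t, ht⟩
  set M : Matrix (Fin 3) (Fin 3) ℂ := (Real.cos t : ℂ) • A + (Real.sin t : ℂ) • B with hMdef
  have hM : M.IsHermitian := by
    unfold M
    unfold Matrix.IsHermitian
    rw [conjTranspose_add, conjTranspose_smul, conjTranspose_smul, hA.eq, hB.eq]
    simp [Complex.star_def, Complex.conj_ofReal, ← Complex.ofReal_cos, ← Complex.ofReal_sin]
  have hM0 : M ≠ 0 := by
    intro hz
    have hz' : (Real.cos t) • A + (Real.sin t) • B = 0 := by
      rw [← hz]
      unfold M
      congr 1 <;> ext i j <;> simp [Complex.real_smul]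
    obtain ⟨h1, h2⟩ := LinearIndependent.pair_iff.mp hli _ _ hz'
    nlinarith [Real.sin_sq_add_cos_sq t]
  have hnull : ∀ n, star (Φ n) ⬝ᵥ (M *ᵥ Φ n) = 0 := by
    intro n
    have h1 := (key A n).symm.trans (hAnull n)
    have h2 := (key B n).symm.trans (hBnull n)
    unfold M
    rw [Matrix.add_mulVec, Matrix.smul_mulVec, Matrix.smul_mulVec,
      dotProduct_add, dotProduct_smul, dotProduct_smul, h1, h2]
    simp
  -- determinant is real, hence zero
  have hdet : ∃ k, hM.eigenvalues k = 0 := by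
    have hd : M.det = ((∏ i, hM.eigenvalues i : ℝ) : ℂ) := by
      rw [hM.det_eq_prod_eigenvalues]; push_cast; rfl
    have : (∏ i, hM.eigenvalues i : ℝ) = 0 := by
      rw [hd] at ht
      rwa [Complex.ofReal_re] at ht
    obtain ⟨k, _, hk⟩ := Finset.prod_eq_zero_iff.mp this
    exact ⟨k, hk⟩
  obtain ⟨k, hk⟩ := hdet
  set U : Matrix (Fin 3) (Fin 3) ℂ := (hM.eigenvectorUnitary : Matrix (Fin 3) (Fin 3) ℂ)
    with hUdef
  set lam : Fin 3 → ℝ := hM.eigenvalues with hlam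
  have hUU : star U * U = 1 := Unitary.coe_star_mul_self hM.eigenvectorUnitary
  -- columns
  set v : Fin 3 → Fin 3 → ℂ := fun i k => U k i with hv
  have dot1 : ∀ i, star (v i) ⬝ᵥ v i = 1 := by
    intro i
    have := congrFun (congrFun hUU i) i
    simpa [Matrix.mul_apply, Matrix.one_apply, dotProduct, hv,
      Matrix.star_apply] using this
  have dot0 : ∀ i j, i ≠ j → star (v i) ⬝ᵥ v j = 0 := by
    intro i j hij
    have := congrFun (congrFun hUU i) j
    simpa [Matrix.mul_apply, Matrix.one_apply, hij, dotProduct, hv,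
      Matrix.star_apply] using this
  set c : Fin N → Fin 3 → ℂ := fun n => star U *ᵥ Φ n with hc
  have meas : ∀ n i, star (Φ n) ⬝ᵥ v i = star (c n i) := by
    intro n i
    simp only [hc, Matrix.mulVec, dotProduct, hv, Pi.star_apply,
      Matrix.star_apply, star_sum, star_mul', star_star]
    apply Finset.sum_congr rfl
    intro j _
    ring
  have quad : ∀ n, ∑ i, lam i * ‖c n i‖ ^ 2 = 0 := by
    intro n
    have expand : star (Φ n) ⬝ᵥ (M *ᵥ Φ n)
        = ((∑ i, lam i * ‖c n i‖ ^ 2 : ℝ) : ℂ) := by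
      conv_lhs => rw [hM.spectral_theorem, Unitary.conjStarAlgAut_apply]
      rw [← Matrix.mulVec_mulVec, ← Matrix.mulVec_mulVec, Matrix.dotProduct_mulVec]
      have hsv : star (Φ n) ᵥ* U = star (c n) := by
        rw [hc, Matrix.star_mulVec]
        congr 1
        rw [Matrix.star_eq_conjTranspose, Matrix.conjTranspose_conjTranspose]
      rw [hsv]
      rw [show ((∑ i, lam i * ‖c n i‖ ^ 2 : ℝ) : ℂ) = ∑ i, (lam i : ℂ) * ((‖c n i‖ : ℝ) : ℂ) ^ 2
        by push_cast; ring_nf]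
      simp only [dotProduct, Pi.star_apply, Matrix.mulVec_diagonal, Function.comp_apply]
      apply Finset.sum_congr rfl
      intro i _
      have hcc : star (c n i) * c n i = ((‖c n i‖ : ℝ) : ℂ) ^ 2 := by
        rw [Complex.star_def, mul_comm, Complex.mul_conj]
        norm_cast
        rw [Complex.normSq_eq_norm_sq]
      calc star (c n i) * (((lam i : ℝ) : ℂ) * c n i)
          = ((lam i : ℝ) : ℂ) * (star (c n i) * c n i) := by ring
        _ = (lam i : ℂ) * ((‖c n i‖ : ℝ) : ℂ) ^ 2 := by rw [hcc]
    have := (hnull n).symm.trans expand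
    exact_mod_cast this.symm
  -- nonzero eigenvalue exists
  have hjex : ∃ j, lam j ≠ 0 := by
    by_contra hall
    push_neg at hall
    apply hM0
    have : Matrix.diagonal (RCLike.ofReal ∘ lam) = (0 : Matrix (Fin 3) (Fin 3) ℂ) := by
      ext i j
      by_cases hij : i = j <;> simp [Matrix.diagonal, hij, hall]
    calc M = U * Matrix.diagonal (RCLike.ofReal ∘ lam) * star U := hM.spectral_theorem
    _ = 0 := by rw [this]; simp
  obtain ⟨j, hj⟩ := hjex
  -- helper: a unit vector orthogonal to all measurements gives contradiction
  have caseA : ∀ w : Fin 3 → ℂ, star w ⬝ᵥ w = 1 → (∀ n, star (Φ n) ⬝ᵥ w = 0) → False := by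
    intro w hw hzero
    obtain ⟨e, he1, he2⟩ := h w 0 (by intro n; rw [hzero n]; simp)
    have he : e ≠ 0 := by intro h0; rw [h0] at he1; simp at he1
    have : w = 0 := by
      have := he2.symm
      rcases smul_eq_zero.mp this with h1 | h2
      · exact absurd h1 he
      · exact h2
    rw [this] at hw
    simp at hw
  by_cases hsign : ∃ p q, 0 < lam p ∧ lam q < 0
  · -- indefinite case
    obtain ⟨p, q, hp, hq⟩ := hsign
    have hpq : p ≠ q := by intro e; rw [e] at hp; linarith
    have hpk : p ≠ k := by intro e; rw [e, hk] at hp; linarith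
    have hqk : q ≠ k := by intro e; rw [e, hk] at hq; linarith
    have quad2 : ∀ n, lam p * ‖c n p‖ ^ 2 + lam q * ‖c n q‖ ^ 2 = 0 := by
      intro n
      have := quad n
      rw [sum_fin3' (fun i => lam i * ‖c n i‖ ^ 2) p q k hpq hpk hqk] at this
      rw [hk] at this
      simpa using this
    set x : Fin 3 → ℂ := (Real.sqrt (lam p) : ℂ) • v p with hx
    set y : Fin 3 → ℂ := (Real.sqrt (-lam q) : ℂ) • v q with hy
    obtain ⟨e, he1, he2⟩ := h x y (by
      intro n
      rw [hx, hy, dotProduct_smul, dotProduct_smul, meas n p, meas n q]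
      rw [smul_eq_mul, smul_eq_mul, norm_mul, norm_mul, norm_star, norm_star]
      rw [mul_pow, mul_pow, Complex.norm_real, Real.norm_eq_abs,
        Complex.norm_real, Real.norm_eq_abs, sq_abs, sq_abs,
        Real.sq_sqrt hp.le, Real.sq_sqrt (by linarith : (0:ℝ) ≤ -lam q)]
      nlinarith [quad2 n])
    -- contradiction via orthogonality
    have h1 : star (v q) ⬝ᵥ y = (Real.sqrt (-lam q) : ℂ) := by
      rw [hy, dotProduct_smul, dot1 q, smul_eq_mul, mul_one]
    have h2 : star (v q) ⬝ᵥ y = 0 := by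
      rw [he2, dotProduct_smul, hx, dotProduct_smul, dot0 q p hpq.symm]
      simp
    rw [h1] at h2
    have : Real.sqrt (-lam q) = 0 := by exact_mod_cast h2
    have := Real.sqrt_pos.mpr (by linarith : (0:ℝ) < -lam q)
    linarith
  · -- semidefinite case: the j-th coefficient vanishes for all n
    push_neg at hsign
    have hcj : ∀ n, c n j = 0 := by
      intro n
      rcases lt_or_gt_of_ne hj with hneg | hpos
      · -- all eigenvalues ≤ 0
        have hall : ∀ i, lam i ≤ 0 := by
          intro i
          by_contra hi
          push_neg at hi
          linarith [hsign i j hi]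
        have hterm : ∀ i ∈ Finset.univ, 0 ≤ -(lam i * ‖c n i‖ ^ 2) := by
          intro i _
          have := hall i
          nlinarith [sq_nonneg ‖c n i‖]
        have hsum : ∑ i, -(lam i * ‖c n i‖ ^ 2) = 0 := by
          simpa using quad n
        have := (Finset.sum_eq_zero_iff_of_nonneg hterm).mp hsum j (Finset.mem_univ j)
        have : lam j * ‖c n j‖ ^ 2 = 0 := by linarith
        rcases mul_eq_zero.mp this with h1 | h2
        · exact absurd h1 hj
        · simpa using h2
      · have hall : ∀ i, 0 ≤ lam i := by
          intro i
          by_contra hi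
          push_neg at hi
          linarith [hsign j i hpos]
        have hterm : ∀ i ∈ Finset.univ, 0 ≤ lam i * ‖c n i‖ ^ 2 := by
          intro i _
          have := hall i
          nlinarith [sq_nonneg ‖c n i‖]
        have := (Finset.sum_eq_zero_iff_of_nonneg hterm).mp (quad n) j (Finset.mem_univ j)
        rcases mul_eq_zero.mp this with h1 | h2
        · exact absurd h1 hj
        · simpa using h2
    apply caseA (v j) (dot1 j)
    intro n
    rw [meas n j, hcj n]
    simp
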